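/- For every positive divisor n of d and every a ∈ ℤ/dℤ with na ≠ 0, the distribution relation θ̃_d(na) = ∑_{i=0}^{n−1} θ̃_d(a + (d/n)·i) holds in ℚ[G]. -/

import Mathlib

open scoped BigOperators

noncomputable section

namespace MotivicGJ

/-- The Stickelberger element `θ_d(a) = ∑_{h ∈ (ℤ/dℤ)ˣ} {-ha/d} σ_h⁻¹ ∈ ℚ[G]`, where
`G = Gal(ℚ(ζ_d)/ℚ)` is identified with `(ℤ/dℤ)ˣ` and `{x}` is the fractional part
(so `{-ha/d} = val(-ha)/d`). -/
def stick (d : ℕ) [NeZero d] (a : ZMod d) : MonoidAlgebra ℚ (ZMod d)ˣ :=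
  ∑ h : (ZMod d)ˣ, MonoidAlgebra.single h⁻¹ ((ZMod.val (-(h : ZMod d) * a) : ℚ) / d)

/-- The trace element `T̃ = ∑_{σ ∈ G} σ ∈ ℚ[G]`. -/
def traceElem (d : ℕ) [NeZero d] : MonoidAlgebra ℚ (ZMod d)ˣ :=
  ∑ σ : (ZMod d)ˣ, MonoidAlgebra.single σ 1

/-- The normalized Stickelberger element `θ̃_d(a) = θ_d(a) - (1/2)T̃`. -/
def stickNorm (d : ℕ) [NeZero d] (a : ZMod d) : MonoidAlgebra ℚ (ZMod d)ˣ :=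
  stick d a - (1 / 2 : ℚ) • traceElem d


lemma sum_range_zmod {M : Type*} [AddCommMonoid M] (n : ℕ) [NeZero n] (F : ZMod n → M) :
    ∑ i ∈ Finset.range n, F (i : ZMod n) = ∑ c : ZMod n, F c := by
  refine Finset.sum_nbij' (fun i => (i : ZMod n)) (fun c => c.val) ?_ ?_ ?_ ?_ ?_
  · intros; exact Finset.mem_univ _
  · intro c _; exact Finset.mem_range.mpr (ZMod.val_lt c)
  · intro i hi; exact ZMod.val_cast_of_lt (Finset.mem_range.mp hi)
  · intro c _; simp [ZMod.natCast_val, ZMod.cast_id]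
  · intros; rfl

lemma sum_units_mul {n : ℕ} [NeZero n] (w : (ZMod n)ˣ) (G : ZMod n → ℚ) :
    ∑ c : ZMod n, G ((w : ZMod n) * c) = ∑ c : ZMod n, G c :=
  Fintype.sum_bijective (fun c => (w : ZMod n) * c) (Units.mulLeft_bijective w) _ _ (fun _ => rfl)

lemma val_sum_key (d n m : ℕ) [NeZero d] (hn : 0 < n) (hmd : m * n = d) (b : ZMod d) :
    2 * ∑ j ∈ Finset.range n, (b + (m : ZMod d) * (j : ℕ)).val
      = 2 * ((n : ZMod d) * b).val + d * (n - 1) := by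
  haveI : NeZero n := ⟨hn.ne'⟩
  have hm : 0 < m := Nat.pos_of_ne_zero fun h => NeZero.ne d (by rw [← hmd, h, zero_mul])
  set v := b.val with hv
  set q := v / m with hq
  set r := v % m with hr
  have hvd : v < d := ZMod.val_lt b
  have hrm : r < m := Nat.mod_lt _ hm
  have hvqr : m * q + r = v := Nat.div_add_mod v m
  -- each term
  have hterm : ∀ j, (b + (m : ZMod d) * (j : ℕ)).val = m * ((q + j) % n) + r := by
    intro j
    have hb : ((v : ℕ) : ZMod d) = b := by rw [hv, ZMod.natCast_val, ZMod.cast_id]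
    have h1 : b + (m : ZMod d) * (j : ℕ) = ((v + m * j : ℕ) : ZMod d) := by
      push_cast [hb]; ring
    rw [h1, ZMod.val_natCast]
    have hmod : (q + j) % n < n := Nat.mod_lt _ hn
    have h2 : m * (q + j) = (q + j) / n * d + m * ((q + j) % n) := by
      conv_lhs => rw [← Nat.div_add_mod (q + j) n]
      rw [← hmd]; ring
    have h3 : v + m * j = (q + j) / n * d + (m * ((q + j) % n) + r) := by
      have : v + m * j = m * (q + j) + r := by rw [← hvqr]; ring
      rw [this, h2]; ring
    have h4 : m * ((q + j) % n) + r < d := by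
      calc m * ((q + j) % n) + r < m * ((q + j) % n) + m := by omega
        _ = m * ((q + j) % n + 1) := by ring
        _ ≤ m * n := Nat.mul_le_mul_left m (by omega)
        _ = d := hmd
    rw [h3, Nat.add_comm, Nat.add_mul_mod_self_right, Nat.mod_eq_of_lt h4]
  have hperm : ∑ j ∈ Finset.range n, (q + j) % n = ∑ j ∈ Finset.range n, j := by
    calc ∑ j ∈ Finset.range n, (q + j) % n
        = ∑ j ∈ Finset.range n, (((q : ZMod n) + (j : ℕ))).val := by
          refine Finset.sum_congr rfl fun j _ => ?_
          rw [show ((q : ZMod n) + (j : ℕ)) = ((q + j : ℕ) : ZMod n) by push_cast; ring,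
            ZMod.val_natCast]
      _ = ∑ c : ZMod n, ((q : ZMod n) + c).val := sum_range_zmod n (fun c => ((q : ZMod n) + c).val)
      _ = ∑ c : ZMod n, c.val := Fintype.sum_equiv (Equiv.addLeft (q : ZMod n)) _ _ (fun c => rfl)
      _ = ∑ j ∈ Finset.range n, j := by
          rw [← sum_range_zmod n (fun c => c.val)]
          exact Finset.sum_congr rfl fun j hj => ZMod.val_cast_of_lt (Finset.mem_range.mp hj)
  have hnb : ((n : ZMod d) * b).val = n * r := by
    have hb : ((v : ℕ) : ZMod d) = b := by rw [hv, ZMod.natCast_val, ZMod.cast_id]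
    have h1 : (n : ZMod d) * b = ((n * v : ℕ) : ZMod d) := by push_cast [hb]; ring
    have h2 : n * v = q * d + n * r := by rw [← hvqr, ← hmd]; ring
    have h3 : n * m = d := by rw [← hmd]; ring
    have h4 : n * (r + 1) ≤ n * m := Nat.mul_le_mul_left n (Nat.succ_le_of_lt hrm)
    have h5 : n * (r + 1) = n * r + n := by ring
    have h6 : n * r < d := by linarith
    rw [h1, ZMod.val_natCast, h2, Nat.add_comm, Nat.add_mul_mod_self_right, Nat.mod_eq_of_lt h6]
  calc 2 * ∑ j ∈ Finset.range n, (b + (m : ZMod d) * (j : ℕ)).val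
      = 2 * ∑ j ∈ Finset.range n, (m * ((q + j) % n) + r) := by
        rw [Finset.sum_congr rfl fun j _ => hterm j]
    _ = 2 * (m * (∑ j ∈ Finset.range n, (q + j) % n) + n * r) := by
        rw [Finset.sum_add_distrib, ← Finset.mul_sum, Finset.sum_const, Finset.card_range,
          smul_eq_mul]
    _ = m * ((∑ j ∈ Finset.range n, j) * 2) + 2 * (n * r) := by rw [hperm]; ring
    _ = m * (n * (n - 1)) + 2 * (n * r) := by rw [Finset.sum_range_id_mul_two]
    _ = 2 * ((n : ZMod d) * b).val + d * (n - 1) := by rw [hnb, ← hmd]; ring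

lemma coeff_key (d n : ℕ) [NeZero d] (hn : 0 < n) (hnd : n ∣ d) (b : ZMod d) :
    ∑ i ∈ Finset.range n,
      ((ZMod.val (b + ((d / n : ℕ) : ZMod d) * ((i : ℕ) : ZMod d)) : ℚ) / d - 1 / 2)
      = (ZMod.val ((n : ZMod d) * b) : ℚ) / d - 1 / 2 := by
  have hmd : d / n * n = d := Nat.div_mul_cancel hnd
  have h := val_sum_key d n (d / n) hn hmd b
  have hd0 : (d : ℚ) ≠ 0 := Nat.cast_ne_zero.mpr (NeZero.ne d)
  have hq : (2 : ℚ) * ∑ j ∈ Finset.range n,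
      (ZMod.val (b + ((d / n : ℕ) : ZMod d) * ((j : ℕ) : ZMod d)) : ℚ)
      = 2 * (ZMod.val ((n : ZMod d) * b) : ℚ) + d * ((n : ℚ) - 1) := by
    have := congrArg (fun t : ℕ => (t : ℚ)) h
    push_cast [Nat.cast_sub (Nat.one_le_iff_ne_zero.mpr hn.ne')] at this
    convert this using 2 <;> push_cast <;> ring
  rw [Finset.sum_sub_distrib, Finset.sum_const, Finset.card_range, ← Finset.sum_div]
  field_simp
  field_simp at hq
  rw [nsmul_eq_mul]
  linarith [hq]

lemma mul_div_cast (d n : ℕ) [NeZero d] [NeZero n] (hnd : n ∣ d) (x : ZMod d) :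
    ((d / n : ℕ) : ZMod d) * x = ((d / n : ℕ) : ZMod d) * ((x.val % n : ℕ) : ZMod d) := by
  have hmd : d / n * n = d := Nat.div_mul_cancel hnd
  set m := d / n with hm
  have hb : ((x.val : ℕ) : ZMod d) = x := by rw [ZMod.natCast_val, ZMod.cast_id]
  conv_lhs => rw [← hb]
  rw [show (m : ZMod d) * ((x.val : ℕ) : ZMod d) = ((m * x.val : ℕ) : ZMod d) by push_cast; ring,
    show (m : ZMod d) * ((x.val % n : ℕ) : ZMod d) = ((m * (x.val % n) : ℕ) : ZMod d) by
      push_cast; ring]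
  rw [ZMod.natCast_eq_natCast_iff]
  have h1 : m * x.val = x.val / n * d + m * (x.val % n) := by
    have h0 : n * (x.val / n) + x.val % n = x.val := Nat.div_add_mod x.val n
    calc m * x.val = m * (n * (x.val / n) + x.val % n) := by rw [h0]
      _ = x.val / n * (m * n) + m * (x.val % n) := by ring
      _ = x.val / n * d + m * (x.val % n) := by rw [hmd]
  rw [h1]
  show (x.val / n * d + m * (x.val % n)) % d = (m * (x.val % n)) % d
  rw [Nat.add_comm, Nat.add_mul_mod_self_right]


lemma sum_reindex (d n : ℕ) [NeZero d] (hn : 0 < n) (hnd : n ∣ d) (u : (ZMod d)ˣ) (b : ZMod d)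
    (F : ZMod d → ℚ) :
    ∑ i ∈ Finset.range n, F (b + ((d / n : ℕ) : ZMod d) * ((u : ZMod d) * ((i : ℕ) : ZMod d))) =
    ∑ i ∈ Finset.range n, F (b + ((d / n : ℕ) : ZMod d) * ((i : ℕ) : ZMod d)) := by
  haveI : NeZero n := ⟨hn.ne'⟩
  set m : ℕ := d / n with hm
  set G : ZMod n → ℚ := fun c => F (b + (m : ZMod d) * ((c.val : ℕ) : ZMod d)) with hG
  have hv : ∀ x : ZMod d, (ZMod.castHom hnd (ZMod n) x).val = x.val % n := by
    intro x
    rw [ZMod.castHom_apply, ← ZMod.natCast_val, ZMod.val_natCast]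
  have key : ∀ x : ZMod d, F (b + (m : ZMod d) * x) = G (ZMod.castHom hnd (ZMod n) x) := by
    intro x
    have h2 := mul_div_cast d n hnd x
    simp only [hG, hv x, ← h2]
    exact congrArg (fun y => F (b + y)) h2
  set w : (ZMod n)ˣ := Units.map (ZMod.castHom hnd (ZMod n)).toMonoidHom u with hw
  calc ∑ i ∈ Finset.range n, F (b + (m : ZMod d) * ((u : ZMod d) * ((i : ℕ) : ZMod d)))
      = ∑ i ∈ Finset.range n, G ((w : ZMod n) * ((i : ℕ) : ZMod n)) := by
        refine Finset.sum_congr rfl fun i _ => ?_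
        rw [key]
        congr 1
        rw [map_mul, map_natCast]
        rfl
    _ = ∑ c : ZMod n, G ((w : ZMod n) * c) := sum_range_zmod n (fun c => G ((w : ZMod n) * c))
    _ = ∑ c : ZMod n, G c := sum_units_mul w G
    _ = ∑ i ∈ Finset.range n, G ((i : ℕ) : ZMod n) := (sum_range_zmod n G).symm
    _ = ∑ i ∈ Finset.range n, F (b + (m : ZMod d) * ((i : ℕ) : ZMod d)) := by
        refine Finset.sum_congr rfl fun i _ => ?_
        rw [key ((i : ℕ) : ZMod d)]
        congr 1
        rw [map_natCast]


lemma stickNorm_eq (d : ℕ) [NeZero d] (a : ZMod d) :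
    stickNorm d a = ∑ h : (ZMod d)ˣ,
      MonoidAlgebra.single h⁻¹ ((ZMod.val (-(h : ZMod d) * a) : ℚ) / d - 1 / 2) := by
  rw [stickNorm, stick, traceElem]
  have ht : (∑ σ : (ZMod d)ˣ, MonoidAlgebra.single σ (1 : ℚ))
      = ∑ h : (ZMod d)ˣ, MonoidAlgebra.single h⁻¹ (1 : ℚ) :=
    Fintype.sum_equiv (Equiv.inv (ZMod d)ˣ) _ _ (fun σ => by simp)
  rw [ht, Finset.smul_sum, ← Finset.sum_sub_distrib]
  refine Finset.sum_congr rfl fun h _ => ?_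
  rw [show ((1:ℚ)/2) • MonoidAlgebra.single (h⁻¹ : (ZMod d)ˣ) (1:ℚ)
      = MonoidAlgebra.single h⁻¹ ((1:ℚ)/2) by
    rw [MonoidAlgebra.smul_single', mul_one]]
  exact (MonoidAlgebra.single_sub _ _ _).symm

/-- **Statement 18** (distribution relation). For every positive divisor `n` of `d` and
every `a ∈ ℤ/dℤ` with `na ≠ 0`, one has `θ̃_d(na) = ∑_{i=0}^{n-1} θ̃_d(a + (d/n)·i)`. -/
theorem stickNorm_distribution (d : ℕ) [NeZero d] (hd : 3 ≤ d)
    (n : ℕ) (hn : 0 < n) (hnd : n ∣ d) (a : ZMod d) (hna : (n : ZMod d) * a ≠ 0) :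
    stickNorm d ((n : ZMod d) * a) =
      ∑ i ∈ Finset.range n, stickNorm d (a + ((d / n : ℕ) : ZMod d) * (i : ZMod d)) := by
  haveI : NeZero n := ⟨hn.ne'⟩
  rw [stickNorm_eq]
  simp only [stickNorm_eq]
  rw [Finset.sum_comm]
  refine Finset.sum_congr rfl fun h _ => ?_
  set u : (ZMod d)ˣ := -h with hu
  set b : ZMod d := -(h : ZMod d) * a with hb
  have h1 : ∀ i : ℕ, -(h : ZMod d) * (a + ((d / n : ℕ) : ZMod d) * (i : ZMod d))
      = b + ((d / n : ℕ) : ZMod d) * ((u : ZMod d) * ((i : ℕ) : ZMod d)) := by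
    intro i
    rw [hb, hu, Units.val_neg]
    ring
  have hc : (ZMod.val (-(h : ZMod d) * ((n : ZMod d) * a)) : ℚ) / d - 1 / 2
      = ∑ i ∈ Finset.range n,
        ((ZMod.val (-(h : ZMod d) * (a + ((d / n : ℕ) : ZMod d) * (i : ZMod d))) : ℚ) / d
          - 1 / 2) := by
    calc (ZMod.val (-(h : ZMod d) * ((n : ZMod d) * a)) : ℚ) / d - 1 / 2
        = (ZMod.val ((n : ZMod d) * b) : ℚ) / d - 1 / 2 := by
          rw [show -(h : ZMod d) * ((n : ZMod d) * a) = (n : ZMod d) * b by rw [hb]; ring]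
      _ = ∑ i ∈ Finset.range n,
            ((ZMod.val (b + ((d / n : ℕ) : ZMod d) * ((i : ℕ) : ZMod d)) : ℚ) / d - 1 / 2) :=
          (coeff_key d n hn hnd b).symm
      _ = ∑ i ∈ Finset.range n,
            ((ZMod.val (b + ((d / n : ℕ) : ZMod d) * ((u : ZMod d) * ((i : ℕ) : ZMod d))) : ℚ) / d
              - 1 / 2) :=
          (sum_reindex d n hn hnd u b (fun x => (ZMod.val x : ℚ) / d - 1 / 2)).symm
      _ = _ := by
          refine Finset.sum_congr rfl fun i _ => ?_
          rw [h1 i]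
  rw [hc]
  exact map_sum (MonoidAlgebra.singleAddHom (h⁻¹ : (ZMod d)ˣ)) _ _


end MotivicGJ
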